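/- Let β ∈ L^∞[0,∞) have a finite mean value β̄ := lim_{T→∞} (1/T)∫₀^T β(t) dt. Then for every f ∈ L¹[0,∞), lim_{N→∞} ∫₀^∞ β(Nt) f(t) dt = β̄ ∫₀^∞ f(t) dt. -/

import Mathlib

open MeasureTheory Filter Set

namespace GRL

variable {β : ℝ → ℝ} {M βbar : ℝ}


lemma abs_int (μ : Measure ℝ) (f : ℝ → ℝ) : |∫ x, f x ∂μ| ≤ ∫ x, |f x| ∂μ := by
  simpa [Real.norm_eq_abs] using norm_integral_le_integral_norm (μ := μ) f

lemma integrableOn_mul (hβm : Measurable β) (hM : ∀ t, 0 ≤ t → |β t| ≤ M)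
    {f : ℝ → ℝ} (hf : IntegrableOn f (Ioi 0)) {N : ℝ} (hN : 0 < N) :
    IntegrableOn (fun t => β (N * t) * f t) (Ioi 0) := by
  apply Integrable.mono' (hf.norm.const_mul M)
  · exact ((hβm.comp (measurable_const_mul N)).aestronglyMeasurable.mul
      hf.aestronglyMeasurable)
  · filter_upwards [ae_restrict_mem measurableSet_Ioi] with t ht
    have h1 : |β (N * t)| ≤ M := hM _ (le_of_lt (mul_pos hN ht))
    calc ‖β (N * t) * f t‖ = |β (N * t)| * ‖f t‖ := by
          rw [norm_mul]; rfl
      _ ≤ M * ‖f t‖ := by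
          apply mul_le_mul_of_nonneg_right h1 (norm_nonneg _)

lemma abs_integral_le (hβm : Measurable β) (hM : ∀ t, 0 ≤ t → |β t| ≤ M)
    {f : ℝ → ℝ} (hf : IntegrableOn f (Ioi 0)) {N : ℝ} (hN : 0 < N) :
    |∫ t in Ioi 0, β (N * t) * f t| ≤ M * ∫ t in Ioi 0, |f t| := by
  calc |∫ t in Ioi 0, β (N * t) * f t| ≤ ∫ t in Ioi 0, |β (N * t) * f t| :=
        abs_int _ _
    _ ≤ ∫ t in Ioi 0, M * |f t| := by
        apply integral_mono_ae (integrableOn_mul hβm hM hf hN).abs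
          (hf.abs.const_mul M)
        filter_upwards [ae_restrict_mem measurableSet_Ioi] with t ht
        rw [abs_mul]
        exact mul_le_mul_of_nonneg_right (hM _ (le_of_lt (mul_pos hN ht))) (abs_nonneg _)
    _ = M * ∫ t in Ioi 0, |f t| := integral_const_mul M _

lemma closure_lemma (hβm : Measurable β) (hM : ∀ t, 0 ≤ t → |β t| ≤ M)
    (hM0 : 0 ≤ M) (hbb : |βbar| ≤ M)
    {f : ℝ → ℝ} (hf : IntegrableOn f (Ioi 0))
    (happrox : ∀ ε : ℝ, 0 < ε → ∃ g : ℝ → ℝ, IntegrableOn g (Ioi 0) ∧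
      (∫ t in Ioi 0, |f t - g t|) ≤ ε ∧
      Tendsto (fun N : ℝ => ∫ t in Ioi 0, β (N * t) * g t) atTop
        (nhds (βbar * ∫ t in Ioi 0, g t))) :
    Tendsto (fun N : ℝ => ∫ t in Ioi 0, β (N * t) * f t) atTop
      (nhds (βbar * ∫ t in Ioi 0, f t)) := by
  rw [Metric.tendsto_nhds]
  intro ε hε
  have h2M : (0:ℝ) < 2 * M + 1 := by linarith
  set ε' := ε / (2 * M + 1) with hε'def
  have hε' : 0 < ε' := div_pos hε h2M
  obtain ⟨g, hg, hfg, hgt⟩ := happrox ε' hε'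
  have hev := Metric.tendsto_nhds.1 hgt ε' hε'
  filter_upwards [hev, eventually_gt_atTop (0:ℝ)] with N hN1 hN2
  have hsub : IntegrableOn (fun t => f t - g t) (Ioi 0) := hf.sub hg
  have key1 : |∫ t in Ioi 0, β (N * t) * (f t - g t)| ≤ M * ∫ t in Ioi 0, |f t - g t| :=
    abs_integral_le hβm hM hsub hN2
  have split : (∫ t in Ioi 0, β (N * t) * f t) - (∫ t in Ioi 0, β (N * t) * g t)
      = ∫ t in Ioi 0, β (N * t) * (f t - g t) := by
    rw [← integral_sub (integrableOn_mul hβm hM hf hN2) (integrableOn_mul hβm hM hg hN2)]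
    congr 1; ext t; ring
  have key2 : |βbar * (∫ t in Ioi 0, g t) - βbar * ∫ t in Ioi 0, f t|
      ≤ M * ∫ t in Ioi 0, |f t - g t| := by
    rw [← mul_sub, abs_mul]
    have : |(∫ t in Ioi 0, g t) - ∫ t in Ioi 0, f t| ≤ ∫ t in Ioi 0, |f t - g t| := by
      rw [← integral_sub hg hf]
      calc |∫ t in Ioi 0, (g t - f t)| ≤ ∫ t in Ioi 0, |g t - f t| :=
            abs_int _ _
        _ = ∫ t in Ioi 0, |f t - g t| := by
            congr 1; ext t; rw [abs_sub_comm]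
    exact mul_le_mul hbb this (abs_nonneg _) hM0
  have hfg' : M * (∫ t in Ioi 0, |f t - g t|) ≤ M * ε' :=
    mul_le_mul_of_nonneg_left hfg hM0
  rw [Real.dist_eq] at hN1 ⊢
  have : |(∫ t in Ioi 0, β (N * t) * f t) - βbar * ∫ t in Ioi 0, f t|
      ≤ |∫ t in Ioi 0, β (N * t) * (f t - g t)|
        + |(∫ t in Ioi 0, β (N * t) * g t) - βbar * ∫ t in Ioi 0, g t|
        + |βbar * (∫ t in Ioi 0, g t) - βbar * ∫ t in Ioi 0, f t| := by
    rw [← split]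
    set A := ∫ t in Ioi 0, β (N * t) * f t
    set B := ∫ t in Ioi 0, β (N * t) * g t
    set C := βbar * ∫ t in Ioi 0, g t
    set D := βbar * ∫ t in Ioi 0, f t
    calc |A - D| = |(A - B) + ((B - C) + (C - D))| := by ring_nf
      _ ≤ |A - B| + |(B - C) + (C - D)| := abs_add_le _ _
      _ ≤ |A - B| + (|B - C| + |C - D|) := by
          exact add_le_add le_rfl (abs_add_le _ _)
      _ = |A - B| + |B - C| + |C - D| := by ring
  have final : |(∫ t in Ioi 0, β (N * t) * f t) - βbar * ∫ t in Ioi 0, f t|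
      < M * ε' + ε' + M * ε' := by
    apply lt_of_le_of_lt this
    have := le_trans key1 hfg'
    have := le_trans key2 hfg'
    linarith
  have : M * ε' + ε' + M * ε' = ε := by
    field_simp [hε'def]
    rw [hε'def]; linarith [div_mul_cancel₀ ε h2M.ne']
  linarith




lemma beta_intervalIntegrable (hβm : Measurable β) (hM : ∀ t, 0 ≤ t → |β t| ≤ M)
    {x : ℝ} (hx : 0 ≤ x) : IntervalIntegrable β volume 0 x := by
  rw [intervalIntegrable_iff]
  apply Integrable.mono' (g := fun _ => M)
  · exact integrableOn_const measure_Ioc_lt_top.ne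
  · exact hβm.aestronglyMeasurable
  · rw [uIoc_of_le hx]
    filter_upwards [ae_restrict_mem measurableSet_Ioc] with t ht
    rw [Real.norm_eq_abs]
    exact hM t ht.1.le

lemma cesaro_scaled (hβm : Measurable β) (hM : ∀ t, 0 ≤ t → |β t| ≤ M)
    (hmean : Tendsto (fun T : ℝ => (1 / T) * ∫ t in (0:ℝ)..T, β t) atTop (nhds βbar))
    {c : ℝ} (hc : 0 ≤ c) :
    Tendsto (fun N : ℝ => N⁻¹ * ∫ t in (0:ℝ)..(N * c), β t) atTop (nhds (βbar * c)) := by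
  rcases eq_or_lt_of_le hc with rfl | hc
  · simp
  · have h1 : Tendsto (fun N : ℝ => N * c) atTop atTop :=
      Tendsto.atTop_mul_const hc tendsto_id
    have h2 := (hmean.comp h1).const_mul c
    rw [mul_comm c βbar] at h2
    apply h2.congr'
    filter_upwards [eventually_gt_atTop (0:ℝ)] with N hN
    simp only [Function.comp]
    rw [← mul_assoc]
    congr 1
    field_simp

lemma Ioc_tendsto (hβm : Measurable β) (hM : ∀ t, 0 ≤ t → |β t| ≤ M)
    (hmean : Tendsto (fun T : ℝ => (1 / T) * ∫ t in (0:ℝ)..T, β t) atTop (nhds βbar))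
    {a b : ℝ} (ha : 0 ≤ a) (hab : a ≤ b) :
    Tendsto (fun N : ℝ => ∫ t in Ioc a b, β (N * t)) atTop (nhds (βbar * (b - a))) := by
  have h := (cesaro_scaled hβm hM hmean (ha.trans hab)).sub (cesaro_scaled hβm hM hmean ha)
  rw [show βbar * (b - a) = βbar * b - βbar * a by ring]
  apply h.congr'
  filter_upwards [eventually_gt_atTop (0:ℝ)] with N hN
  have key : ∫ t in Ioc a b, β (N * t) = ∫ t in a..b, β (N * t) :=
    (intervalIntegral.integral_of_le hab).symm
  have hb : (0:ℝ) ≤ b := ha.trans hab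
  have hsplit : ∫ t in (N * a)..(N * b), β t
      = (∫ t in (0:ℝ)..(N * b), β t) - ∫ t in (0:ℝ)..(N * a), β t := by
    rw [← intervalIntegral.integral_interval_sub_left
      (beta_intervalIntegrable hβm hM (by positivity : (0:ℝ) ≤ N * b))
      (beta_intervalIntegrable hβm hM (by positivity : (0:ℝ) ≤ N * a))]
  rw [key, intervalIntegral.integral_comp_mul_left β hN.ne', smul_eq_mul, hsplit, mul_sub]




lemma indicator_integral (h : ℝ → ℝ) {a b c : ℝ} (ha : 0 ≤ a) (hab : a ≤ b) :
    ∫ t in Ioi 0, h t * indicator (Ioc a b) (fun _ => c) t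
      = (∫ t in Ioc a b, h t) * c := by
  have hsub : Ioc a b ⊆ Ioi (0:ℝ) := fun t ht => lt_of_le_of_lt ha ht.1
  have heq : (fun t => h t * indicator (Ioc a b) (fun _ => c) t)
      = indicator (Ioc a b) (fun t => h t * c) := by
    ext t
    by_cases ht : t ∈ Ioc a b <;> simp [indicator_apply, ht]
  rw [heq, integral_indicator measurableSet_Ioc, Measure.restrict_restrict measurableSet_Ioc,
    inter_eq_self_of_subset_left hsub, integral_mul_const]

lemma indicator_tendsto (hβm : Measurable β) (hM : ∀ t, 0 ≤ t → |β t| ≤ M)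
    (hmean : Tendsto (fun T : ℝ => (1 / T) * ∫ t in (0:ℝ)..T, β t) atTop (nhds βbar))
    {a b c : ℝ} (ha : 0 ≤ a) (hab : a ≤ b) :
    Tendsto (fun N : ℝ => ∫ t in Ioi 0, β (N * t) * indicator (Ioc a b) (fun _ => c) t) atTop
      (nhds (βbar * ∫ t in Ioi 0, indicator (Ioc a b) (fun _ => c) t)) := by
  have hsub : Ioc a b ⊆ Ioi (0:ℝ) := fun t ht => lt_of_le_of_lt ha ht.1
  have hI : (∫ t in Ioi 0, indicator (Ioc a b) (fun _ => c) t) = c * (b - a) := by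
    rw [integral_indicator measurableSet_Ioc, Measure.restrict_restrict measurableSet_Ioc,
      inter_eq_self_of_subset_left hsub, setIntegral_const, smul_eq_mul, Real.volume_real_Ioc_of_le hab,
      mul_comm]
  rw [hI]
  have h := (Ioc_tendsto hβm hM hmean ha hab).mul_const c
  have : βbar * (c * (b - a)) = βbar * (b - a) * c := by ring
  rw [this]
  apply h.congr
  intro N
  rw [indicator_integral (fun t => β (N * t)) ha hab]




lemma step_integrable (a b c : ℝ) :
    IntegrableOn (indicator (Ioc a b) (fun _ => c)) (Ioi 0) volume := by
  apply Integrable.integrableOn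
  exact IntegrableOn.integrable_indicator
    (integrableOn_const measure_Ioc_lt_top.ne) measurableSet_Ioc

lemma exists_R (g : ℝ → ℝ) (hgs : HasCompactSupport g) :
    ∃ R : ℝ, 0 < R ∧ ∀ t, R < t → g t = 0 := by
  obtain ⟨R, hR⟩ := hgs.isBounded.subset_closedBall 0
  refine ⟨max R 1, lt_of_lt_of_le one_pos (le_max_right _ _), fun t ht => ?_⟩
  apply image_eq_zero_of_notMem_tsupport
  intro hmem
  have := hR hmem
  rw [Real.closedBall_eq_Icc] at this
  have h1 : t ≤ R := by simpa using this.2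
  have : R ≤ max R 1 := le_max_left _ _
  linarith


lemma cont_case (hβm : Measurable β) (hM : ∀ t, 0 ≤ t → |β t| ≤ M)
    (hM0 : 0 ≤ M) (hbb : |βbar| ≤ M)
    (hmean : Tendsto (fun T : ℝ => (1 / T) * ∫ t in (0:ℝ)..T, β t) atTop (nhds βbar))
    (g : ℝ → ℝ) (hgc : Continuous g) (hgs : HasCompactSupport g) :
    Tendsto (fun N : ℝ => ∫ t in Ioi 0, β (N * t) * g t) atTop
      (nhds (βbar * ∫ t in Ioi 0, g t)) := by
  have hgint : IntegrableOn g (Ioi 0) :=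
    (hgc.integrable_of_hasCompactSupport hgs).integrableOn
  apply closure_lemma hβm hM hM0 hbb hgint
  intro ε hε
  obtain ⟨R, hR0, hRsupp⟩ := exists_R g hgs
  set ε₀ := ε / (R + 1) with hε₀def
  have hε₀ : 0 < ε₀ := div_pos hε (by linarith)
  have hunif : UniformContinuous g := hgs.uniformContinuous_of_continuous hgc
  obtain ⟨δ, hδ0, hδ⟩ := Metric.uniformContinuous_iff.1 hunif ε₀ hε₀
  obtain ⟨n, hn⟩ := exists_nat_gt (R / δ)
  have hn0 : 0 < n := by
    have : 0 < R / δ := div_pos hR0 hδ0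
    exact_mod_cast lt_of_lt_of_le (by exact_mod_cast this.trans hn : (0:ℝ) < n) le_rfl
  have hn0' : (0:ℝ) < n := Nat.cast_pos.2 hn0
  have hRn : R / n < δ := by
    rw [div_lt_iff₀ hn0']
    rw [div_lt_iff₀ hδ0] at hn
    linarith [hn]
  set x : ℕ → ℝ := fun i => (i:ℝ) * (R / n) with hxdef
  have hx0 : ∀ i : ℕ, 0 ≤ x i := fun i => by
    apply mul_nonneg (Nat.cast_nonneg i) (div_pos hR0 hn0').le
  have hxmono : ∀ i j : ℕ, i ≤ j → x i ≤ x j := fun i j hij => by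
    apply mul_le_mul_of_nonneg_right (by exact_mod_cast hij) (div_pos hR0 hn0').le
  have hxn : x n = R := by
    rw [hxdef]; field_simp
  set s : ℝ → ℝ := fun t => ∑ i ∈ Finset.range n,
    indicator (Ioc (x i) (x (i+1))) (fun _ => g (x (i+1))) t with hsdef
  have hsint : IntegrableOn s (Ioi 0) := by
    apply integrable_finset_sum
    intro i _
    exact step_integrable _ _ _
  -- pointwise bound
  have hclose : ∀ t ∈ Ioi (0:ℝ), |g t - s t| ≤ indicator (Ioc 0 R) (fun _ => ε₀) t := by
    intro t ht
    by_cases htR : t ≤ R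
    · have htmem : t ∈ Ioc (0:ℝ) R := ⟨ht, htR⟩
      rw [indicator_of_mem htmem]
      -- find the unique interval containing t
      have hy0 : 0 < t * n / R := div_pos (mul_pos ht hn0') hR0
      set k := ⌈t * n / R⌉₊ with hk
      have hk1 : 1 ≤ k := Nat.one_le_iff_ne_zero.2 (by
        intro h
        have := Nat.ceil_pos.2 hy0
        omega)
      have hkn : k ≤ n := by
        apply Nat.ceil_le.2
        rw [div_le_iff₀ hR0]
        calc t * n ≤ R * n := by nlinarith
          _ = n * R := by ring
      set i := k - 1 with hidef
      have hi : i < n := by omega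
      have hcast : ((i:ℕ) : ℝ) + 1 = (k:ℝ) := by
        rw [hidef, Nat.cast_sub hk1]; simp
      have htmem2 : t ∈ Ioc (x i) (x (i+1)) := by
        constructor
        · have hceil : (k:ℝ) < t * n / R + 1 := Nat.ceil_lt_add_one hy0.le
          have h2 : ((i:ℕ):ℝ) < t * n / R := by
            rw [show ((i:ℕ):ℝ) = (k:ℝ) - 1 by linarith [hcast]]
            linarith
          calc x i = ((i:ℕ):ℝ) * (R / n) := rfl
            _ < (t * n / R) * (R / n) :=
                mul_lt_mul_of_pos_right h2 (div_pos hR0 hn0')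
            _ = t := by field_simp
        · have hle : t * n / R ≤ (k:ℝ) := Nat.le_ceil _
          calc t = (t * n / R) * (R / n) := by field_simp
            _ ≤ (k:ℝ) * (R / n) :=
                mul_le_mul_of_nonneg_right hle (div_pos hR0 hn0').le
            _ = x (i+1) := by
                rw [hxdef]
                push_cast
                rw [hcast]
      -- evaluate s t
      have hst : s t = g (x (i+1)) := by
        show (∑ i ∈ Finset.range n,
          indicator (Ioc (x i) (x (i+1))) (fun _ => g (x (i+1))) t) = g (x (i+1))
        rw [Finset.sum_eq_single_of_mem i (Finset.mem_range.2 hi)]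
        · exact indicator_of_mem htmem2 _
        · intro j hj hji
          apply indicator_of_notMem
          intro hmem
          rcases lt_or_gt_of_ne hji with h | h
          · -- j < i : x (j+1) ≤ x i < t
            have : x (j+1) ≤ x i := hxmono _ _ (by omega)
            exact absurd hmem.2 (not_le.2 (lt_of_le_of_lt this htmem2.1))
          · -- i < j : t ≤ x (i+1) ≤ x j
            have : x (i+1) ≤ x j := hxmono _ _ (by omega)
            exact absurd hmem.1 (not_lt.2 (htmem2.2.trans this))
      rw [hst]
      have hdist : dist t (x (i+1)) < δ := by
        rw [Real.dist_eq, abs_sub_lt_iff]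
        have h1 : x (i+1) - x i = R / n := by
          rw [hxdef]; push_cast; ring
        constructor
        · linarith [htmem2.2, div_pos hR0 hn0']
        · have := htmem2.1
          linarith [hRn]
      exact (hδ hdist).le
    · push_neg at htR
      have h1 : g t = 0 := hRsupp t htR
      have h2 : s t = 0 := by
        show (∑ j ∈ Finset.range n,
          indicator (Ioc (x j) (x (j+1))) (fun _ => g (x (j+1))) t) = 0
        apply Finset.sum_eq_zero
        intro j hj
        apply indicator_of_notMem
        intro hmem
        have hj' : (j:ℕ) + 1 ≤ n := Finset.mem_range.1 hj
        have : x (j+1) ≤ R := by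
          rw [← hxn]; exact hxmono _ _ hj'
        linarith [hmem.2]
      rw [h1, h2, indicator_of_notMem (fun hmem => absurd hmem.2 (not_le.2 htR))]
      simp
  have hint2 : ∫ t in Ioi 0, |g t - s t| ≤ ε := by
    have hmono : ∫ t in Ioi 0, |g t - s t|
        ≤ ∫ t in Ioi 0, indicator (Ioc 0 R) (fun _ => ε₀) t := by
      apply integral_mono_ae ((hgint.sub hsint).abs) (step_integrable 0 R ε₀)
      filter_upwards [ae_restrict_mem measurableSet_Ioi] with t ht
      exact hclose t ht
    have hval : ∫ t in Ioi 0, indicator (Ioc 0 R) (fun _ => ε₀) t = ε₀ * R := by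
      have hsub2 : Ioc (0:ℝ) R ∩ Ioi 0 = Ioc 0 R :=
        inter_eq_self_of_subset_left fun u hu => hu.1
      rw [integral_indicator measurableSet_Ioc, Measure.restrict_restrict measurableSet_Ioc,
        hsub2, setIntegral_const, smul_eq_mul,
        Real.volume_real_Ioc_of_le (by linarith : (0:ℝ) ≤ R)]
      ring
    have hfin : ε₀ * R ≤ ε := by
      rw [hε₀def, div_mul_eq_mul_div, div_le_iff₀ (by linarith : (0:ℝ) < R + 1)]
      nlinarith
    linarith
  refine ⟨s, hsint, hint2, ?_⟩
  have hlim := tendsto_finset_sum (Finset.range n) (fun i (_ : i ∈ Finset.range n) =>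
    indicator_tendsto hβm hM hmean (hx0 i) (hxmono i (i+1) (Nat.le_succ i))
      (c := g (x (i+1))))
  have hsum : (∑ i ∈ Finset.range n, βbar * ∫ t in Ioi 0,
      indicator (Ioc (x i) (x (i+1))) (fun _ => g (x (i+1))) t)
      = βbar * ∫ t in Ioi 0, s t := by
    rw [← Finset.mul_sum]
    congr 1
    rw [← integral_finset_sum _ (fun i _ => step_integrable _ _ _)]
  rw [← hsum]
  apply hlim.congr'
  filter_upwards [eventually_gt_atTop (0:ℝ)] with N hN
  rw [← integral_finset_sum _
    (fun i _ => integrableOn_mul hβm hM (step_integrable _ _ _) hN)]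
  congr 1
  ext t
  show (∑ i ∈ Finset.range n, β (N * t) *
    indicator (Ioc (x i) (x (i+1))) (fun _ => g (x (i+1))) t) = β (N * t) * s t
  rw [hsdef, Finset.mul_sum]


end GRL

open Set in
/-- Generalized Riemann–Lebesgue lemma: if `β ∈ L^∞[0,∞)` has Cesàro mean `βbar`,
then for every `f ∈ L¹[0,∞)`, `∫₀^∞ β(Nt) f(t) dt → βbar ∫₀^∞ f`. -/
theorem generalized_riemann_lebesgue
    (β : ℝ → ℝ) (βbar : ℝ)
    (hβm : Measurable β)
    (hβb : ∃ M : ℝ, ∀ t : ℝ, 0 ≤ t → |β t| ≤ M)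
    (hmean : Tendsto (fun T : ℝ => (1 / T) * ∫ t in (0:ℝ)..T, β t) atTop (nhds βbar))
    (f : ℝ → ℝ) (hf : IntegrableOn f (Set.Ioi (0:ℝ))) :
    Tendsto (fun N : ℝ => ∫ t in Set.Ioi (0:ℝ), β (N * t) * f t) atTop
      (nhds (βbar * ∫ t in Set.Ioi (0:ℝ), f t)) := by
  obtain ⟨M₀, hM₀⟩ := hβb
  set M := max M₀ 0 with hMdef
  have hM : ∀ t, 0 ≤ t → |β t| ≤ M := fun t ht => (hM₀ t ht).trans (le_max_left _ _)
  have hM0 : (0:ℝ) ≤ M := le_max_right _ _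
  have hbb : |βbar| ≤ M := by
    have habs : Tendsto (fun T : ℝ => |(1 / T) * ∫ t in (0:ℝ)..T, β t|) atTop
        (nhds |βbar|) := hmean.abs
    apply le_of_tendsto habs
    filter_upwards [eventually_gt_atTop (0:ℝ)] with T hT
    have hbd : ‖∫ t in (0:ℝ)..T, β t‖ ≤ M * |T - 0| := by
      apply intervalIntegral.norm_integral_le_of_norm_le_const
      intro u hu
      rw [uIoc_of_le hT.le] at hu
      rw [Real.norm_eq_abs]
      exact hM u hu.1.le
    rw [Real.norm_eq_abs, sub_zero, abs_of_pos hT] at hbd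
    rw [abs_mul, abs_of_pos (by positivity : (0:ℝ) < 1/T)]
    calc 1/T * |∫ t in (0:ℝ)..T, β t| ≤ 1/T * (M * T) := by
          apply mul_le_mul_of_nonneg_left hbd (by positivity)
      _ = M := by field_simp
  apply GRL.closure_lemma hβm hM hM0 hbb hf
  intro ε hε
  have hf0 : Integrable (indicator (Ioi 0) f) volume :=
    hf.integrable_indicator measurableSet_Ioi
  obtain ⟨g, hgs, hgdist, hgc, hgint⟩ := hf0.exists_hasCompactSupport_integral_sub_le hε
  refine ⟨g, (hgc.integrable_of_hasCompactSupport hgs).integrableOn, ?_,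
    GRL.cont_case hβm hM hM0 hbb hmean g hgc hgs⟩
  have h1 : ∫ t in Ioi (0:ℝ), |f t - g t| = ∫ t in Ioi 0, |indicator (Ioi 0) f t - g t| := by
    apply setIntegral_congr_fun measurableSet_Ioi
    intro t ht
    simp only [indicator_of_mem ht]
  rw [h1]
  calc ∫ t in Ioi (0:ℝ), |indicator (Ioi 0) f t - g t|
      ≤ ∫ t, |indicator (Ioi 0) f t - g t| := by
        apply integral_mono_measure Measure.restrict_le_self
        · exact Eventually.of_forall fun t => abs_nonneg _
        · exact (hf0.sub (hgc.integrable_of_hasCompactSupport hgs)).abs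
    _ ≤ ε := by simpa [Real.norm_eq_abs] using hgdist
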